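/- A single-row edge-matching puzzle (with free border at top and bottom) whose allowed manipulations are swaps and flips is solvable if and only if the associated undirected multigraph — with one vertex per color and, for each piece, one edge joining the colors of its left and right edges — has an Eulerian trail. -/

import Mathlib

/-- A piece is a 4-tuple of colors: (right, top, left, bottom). -/
abbrev Piece (C : Type*) := C × C × C × C

/-- Flipping a piece exchanges its left and right colors. -/
def flipPiece {C : Type*} (p : Piece C) : Piece C := (p.2.2.1, p.2.1, p.1, p.2.2.2)

/-- A piece possibly flipped, as placed on the board. -/
def placeFlip {C : Type*} (x : Piece C × Bool) : Piece C :=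
  if x.2 then flipPiece x.1 else x.1

/-- The single-row puzzle with swaps and flips is solvable: some ordering of all the
pieces, each possibly flipped, in which the right color of each piece equals the
left color of its successor. -/
def SolvableSwapFlip {C : Type*} (P : Multiset (Piece C)) : Prop :=
  ∃ l : List (Piece C × Bool),
    (↑(l.map Prod.fst) : Multiset (Piece C)) = P ∧
    l.Chain' fun x y => (placeFlip x).1 = (placeFlip y).2.2.1

/-- An Eulerian trail in an undirected multigraph: a list of directed traversals
using every edge exactly once, consecutive traversals head-to-tail. -/
def IsEulerianTrail {V : Type*} (E : Multiset (Sym2 V)) (l : List (V × V)) : Prop :=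
  (↑(l.map fun p => s(p.1, p.2)) : Multiset (Sym2 V)) = E ∧
    l.Chain' fun p q => p.2 = q.1

def HasEulerianTrail {V : Type*} (E : Multiset (Sym2 V)) : Prop :=
  ∃ l : List (V × V), IsEulerianTrail E l

lemma placeFlip_sym2 {C : Type*} (x : Piece C × Bool) :
    s((placeFlip x).2.2.1, (placeFlip x).1) = s(x.1.2.2.1, x.1.1) := by
  obtain ⟨p, b⟩ := x
  cases b <;> simp [placeFlip, flipPiece, Sym2.eq_swap]

lemma chain'_transfer {α β : Type*} {R : α → β → Prop} {S : β → β → Prop} {T : α → α → Prop}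
    (h : ∀ x y a b, R x a → R y b → S a b → T x y) :
    ∀ {l : List α} {m : List β}, List.Forall₂ R l m → m.Chain' S → l.Chain' T := by
  intro l m hf
  induction hf with
  | nil => intro _; exact List.isChain_nil
  | @cons a b l' m' hr hf ih =>
    intro hc
    cases hf with
    | nil => exact List.isChain_singleton _
    | cons hr2 hf2 =>
      unfold List.Chain' at hc ⊢
      rw [List.isChain_cons_cons] at hc ⊢
      exact ⟨h _ _ _ _ hr hr2 hc.1, ih hc.2⟩

lemma eulerian_backward {C : Type*} :
    ∀ (l : List (C × C)) (P : Multiset (Piece C)),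
      (↑(l.map fun p => s(p.1, p.2)) : Multiset (Sym2 C)) =
        P.map (fun p => s(p.2.2.1, p.1)) →
      ∃ l' : List (Piece C × Bool),
        (↑(l'.map Prod.fst) : Multiset (Piece C)) = P ∧
        List.Forall₂ (fun x pr => (placeFlip x).2.2.1 = pr.1 ∧ (placeFlip x).1 = pr.2)
          l' l := by
  intro l
  induction l with
  | nil =>
    intro P h
    refine ⟨[], ?_, List.Forall₂.nil⟩
    simp only [List.map_nil, Multiset.coe_nil] at h ⊢
    exact (Multiset.map_eq_zero.mp h.symm).symm
  | cons ab l ih =>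
    intro P h
    have hmem : s(ab.1, ab.2) ∈ P.map (fun p : Piece C => s(p.2.2.1, p.1)) := by
      rw [← h]; simp
    obtain ⟨p, hp, hf⟩ := Multiset.mem_map.mp hmem
    obtain ⟨Q, hP⟩ := Multiset.exists_cons_of_mem hp
    have h' : (↑(l.map fun q => s(q.1, q.2)) : Multiset (Sym2 C)) =
        Q.map (fun q : Piece C => s(q.2.2.1, q.1)) := by
      have := h
      rw [hP, Multiset.map_cons, List.map_cons, ← Multiset.cons_coe, hf] at this
      exact (Multiset.cons_inj_right _).mp this
    obtain ⟨l', hl1, hl2⟩ := ih Q h'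
    rcases Sym2.eq_iff.mp hf with ⟨h1, h2⟩ | ⟨h1, h2⟩
    · refine ⟨(p, false) :: l', ?_, List.Forall₂.cons ?_ hl2⟩
      · rw [List.map_cons, ← Multiset.cons_coe, hl1, ← hP]
      · constructor <;> simp [placeFlip, h1, h2]
    · refine ⟨(p, true) :: l', ?_, List.Forall₂.cons ?_ hl2⟩
      · rw [List.map_cons, ← Multiset.cons_coe, hl1, ← hP]
      · constructor <;> simp [placeFlip, flipPiece, h1, h2]

theorem solvable_swap_flip_iff_eulerian {C : Type*} (P : Multiset (Piece C)) :
    SolvableSwapFlip P ↔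
      HasEulerianTrail (P.map fun p => s(p.2.2.1, p.1)) := by
  constructor
  · rintro ⟨l, hl, hc⟩
    refine ⟨l.map (fun x => ((placeFlip x).2.2.1, (placeFlip x).1)), ?_, ?_⟩
    · rw [List.map_map]
      have : ((fun p : C × C => s(p.1, p.2)) ∘
          fun x : Piece C × Bool => ((placeFlip x).2.2.1, (placeFlip x).1)) =
          (fun p : Piece C => s(p.2.2.1, p.1)) ∘ Prod.fst := by
        funext x
        exact placeFlip_sym2 x
      rw [this, ← List.map_map, ← hl]
      simp
    · unfold List.Chain' at hc ⊢
      rw [List.isChain_map]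
      exact hc.imp (fun x y hxy => hxy)
  · rintro ⟨l, hl, hc⟩
    obtain ⟨l', hl1, hl2⟩ := eulerian_backward l P hl
    refine ⟨l', hl1, ?_⟩
    exact chain'_transfer (fun x y a b hxa hyb hab => by
      rw [hxa.2, hab, ← hyb.1]) hl2 hc
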